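/- Let H be a complex Hilbert space, T a bounded operator on H, P and Q orthogonal projections on H, and 0 ≤ r. Assume T maps the range of P into the range of Q, T maps the kernel of P into the kernel of Q, ‖T x‖ ≤ ‖x‖ for x in the range of P, and ‖T x‖ ≤ r‖x‖ for x in the kernel of P. Then for all x, y ∈ H: |⟨Tx, y⟩| ≤ (‖Px‖² + r‖(I−P)x‖²)^{1/2} · (‖Qy‖² + r‖(I−Q)y‖²)^{1/2}. -/

import Mathlib

/-- A two-block Cauchy–Schwarz estimate: if `T` maps `ran P` into `ran Q` contractively
and `ker P` into `ker Q` with norm at most `r`, then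
`|⟨Tx, y⟩| ≤ (‖Px‖² + r‖(I−P)x‖²)^{1/2} (‖Qy‖² + r‖(I−Q)y‖²)^{1/2}`. -/
theorem stmt5 {H : Type*} [NormedAddCommGroup H] [InnerProductSpace ℂ H] [CompleteSpace H]
    (T P Q : H →L[ℂ] H) (r : ℝ) (hr : 0 ≤ r)
    (hP1 : IsIdempotentElem P) (hP2 : ContinuousLinearMap.adjoint P = P)
    (hQ1 : IsIdempotentElem Q) (hQ2 : ContinuousLinearMap.adjoint Q = Q)
    (hranTP : ∀ x ∈ LinearMap.range (P : H →ₗ[ℂ] H), T x ∈ LinearMap.range (Q : H →ₗ[ℂ] H))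
    (hkerTP : ∀ x ∈ LinearMap.ker (P : H →ₗ[ℂ] H), T x ∈ LinearMap.ker (Q : H →ₗ[ℂ] H))
    (hcontr : ∀ x ∈ LinearMap.range (P : H →ₗ[ℂ] H), ‖T x‖ ≤ ‖x‖)
    (hsmall : ∀ x ∈ LinearMap.ker (P : H →ₗ[ℂ] H), ‖T x‖ ≤ r * ‖x‖) :
    ∀ x y : H, ‖(inner ℂ (T x) y : ℂ)‖ ≤
      Real.sqrt (‖P x‖ ^ 2 + r * ‖x - P x‖ ^ 2) *
      Real.sqrt (‖Q y‖ ^ 2 + r * ‖y - Q y‖ ^ 2) := by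
  intro x y
  have hPx : P x ∈ LinearMap.range (P : H →ₗ[ℂ] H) := ⟨x, rfl⟩
  have hker : x - P x ∈ LinearMap.ker (P : H →ₗ[ℂ] H) := by
    simp only [LinearMap.mem_ker, ContinuousLinearMap.coe_coe, map_sub]
    have : P (P x) = P x := by
      have := congrArg (fun S : H →L[ℂ] H => S x) hP1
      simpa [ContinuousLinearMap.mul_apply] using this
    simp [this]
  -- split the inner product
  have hsplit : (inner ℂ (T x) y : ℂ) =
      inner ℂ (T (P x)) (Q y) + inner ℂ (T (x - P x)) (y - Q y) := by
    obtain ⟨v, hv⟩ := hranTP (P x) hPx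
    have hk : Q (T (x - P x)) = 0 := hkerTP _ hker
    have h1 : (inner ℂ (T (P x)) (Q y) : ℂ) = inner ℂ (T (P x)) y := by
      rw [← hv]
      calc (inner ℂ (Q v) (Q y) : ℂ) = inner ℂ v (ContinuousLinearMap.adjoint Q (Q y)) := by
            rw [ContinuousLinearMap.adjoint_inner_right]
        _ = inner ℂ v (Q (Q y)) := by rw [hQ2]
        _ = inner ℂ v (Q y) := by
            have : Q (Q y) = Q y := by
              have := congrArg (fun S : H →L[ℂ] H => S y) hQ1
              simpa [ContinuousLinearMap.mul_apply] using this
            rw [this]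
        _ = inner ℂ (ContinuousLinearMap.adjoint Q v) y :=
            (ContinuousLinearMap.adjoint_inner_left Q y v).symm
        _ = inner ℂ (Q v) y := by rw [hQ2]
    have h2 : (inner ℂ (T (x - P x)) (y - Q y) : ℂ) = inner ℂ (T (x - P x)) y := by
      have : (inner ℂ (T (x - P x)) (Q y) : ℂ) = 0 := by
        rw [← ContinuousLinearMap.adjoint_inner_left Q y (T (x - P x)), hQ2, hk, inner_zero_left]
      rw [inner_sub_right, this, sub_zero]
    rw [h1, h2, ← inner_add_left]
    congr 1
    rw [← map_add]
    congr 1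
    abel
  have hb1 : ‖(inner ℂ (T (P x)) (Q y) : ℂ)‖ ≤ ‖P x‖ * ‖Q y‖ := by
    calc ‖(inner ℂ (T (P x)) (Q y) : ℂ)‖ ≤ ‖T (P x)‖ * ‖Q y‖ := norm_inner_le_norm _ _
      _ ≤ ‖P x‖ * ‖Q y‖ := by
          gcongr
          exact hcontr _ hPx
  have hb2 : ‖(inner ℂ (T (x - P x)) (y - Q y) : ℂ)‖ ≤ r * ‖x - P x‖ * ‖y - Q y‖ := by
    calc ‖(inner ℂ (T (x - P x)) (y - Q y) : ℂ)‖ ≤ ‖T (x - P x)‖ * ‖y - Q y‖ :=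
          norm_inner_le_norm _ _
      _ ≤ r * ‖x - P x‖ * ‖y - Q y‖ :=
          mul_le_mul_of_nonneg_right (hsmall _ hker) (norm_nonneg _)
  have htri : ‖(inner ℂ (T x) y : ℂ)‖ ≤ ‖P x‖ * ‖Q y‖ + r * ‖x - P x‖ * ‖y - Q y‖ := by
    rw [hsplit]
    exact (norm_add_le _ _).trans (add_le_add hb1 hb2)
  refine htri.trans ?_
  set A := ‖P x‖; set B := ‖x - P x‖; set C := ‖Q y‖; set D := ‖y - Q y‖
  have hA : 0 ≤ A := norm_nonneg _
  have hB : 0 ≤ B := norm_nonneg _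
  have hC : 0 ≤ C := norm_nonneg _
  have hD : 0 ≤ D := norm_nonneg _
  have hsq : (A * C + r * B * D) ^ 2 ≤ (A ^ 2 + r * B ^ 2) * (C ^ 2 + r * D ^ 2) := by
    nlinarith [sq_nonneg (A * D - B * C), mul_nonneg hr (sq_nonneg (A * D - B * C)),
      sq_nonneg (A*D - B*C), mul_nonneg (mul_nonneg hr hr) (sq_nonneg (B*D)),
      sq_nonneg (r*B*D - r*B*D)]
  have hlhs : 0 ≤ A * C + r * B * D := by positivity
  calc A * C + r * B * D = Real.sqrt ((A * C + r * B * D) ^ 2) := by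
        rw [Real.sqrt_sq hlhs]
    _ ≤ Real.sqrt ((A ^ 2 + r * B ^ 2) * (C ^ 2 + r * D ^ 2)) := Real.sqrt_le_sqrt hsq
    _ = Real.sqrt (A ^ 2 + r * B ^ 2) * Real.sqrt (C ^ 2 + r * D ^ 2) := by
        rw [Real.sqrt_mul (by positivity)]
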